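/- If ε ≥ r, then the complement ℝ² \ S_ε is a connected set (the hole has died: no bounded component of the complement remains). -/

import Mathlib

set_option maxHeartbeats 1000000
open Metric Set
open scoped RealInnerProductSpace

private lemma mySeg {E : Type*} [NormedAddCommGroup E] [NormedSpace ℝ E] {C : Set E}
    (p v : E) (h : ∀ t : ℝ, 0 ≤ t → t ≤ 1 → p + t • v ∈ C) : JoinedIn C p (p + v) := by
  have hcont : Continuous fun t : unitInterval => p + (t : ℝ) • v := by continuity
  exact ⟨⟨⟨fun t => p + (t : ℝ) • v, hcont⟩, by simp, by simp⟩, fun t => h t t.2.1 t.2.2⟩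

private lemma mySq {a b : ℝ} (ha : 0 ≤ a) (hb : 0 ≤ b) (h : a ^ 2 ≤ b ^ 2) : a ≤ b := by
  nlinarith

private lemma myPt (a b : ℝ) :
    ∃ q : EuclideanSpace ℝ (Fin 2), q 0 = a ∧ q 1 = b ∧ ‖q‖ = Real.sqrt (a ^ 2 + b ^ 2) := by
  refine ⟨(WithLp.equiv 2 (∀ _ : Fin 2, ℝ)).symm ![a, b], by simp, by simp, ?_⟩
  rw [EuclideanSpace.norm_eq]
  simp [Fin.sum_univ_two, sq_abs]

private lemma myKey {r s c x y : ℝ} (h3 : x ^ 2 ≤ r * c * x) (h4 : y ^ 2 ≤ r * s * y)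
    (hr2 : r ^ 2 * s ^ 2 + r ^ 2 * c ^ 2 = r ^ 2) :
    (x - r * c) ^ 2 + (y - r * s) ^ 2 ≤ r ^ 2 := by nlinarith

private lemma myGrow {a n ip m : ℝ} (ha : 1 ≤ a) (hip : ip ≤ n ^ 2) :
    n ^ 2 - 2 * ip + m ≤ (a * n) ^ 2 - 2 * (a * ip) + m := by
  nlinarith [mul_nonneg (by linarith : (0:ℝ) ≤ a - 1) (by linarith : (0:ℝ) ≤ n ^ 2 - ip),
    sq_nonneg ((a - 1) * n)]

private lemma myDist (x y : EuclideanSpace ℝ (Fin 2)) :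
    dist x y = Real.sqrt ((x 0 - y 0) ^ 2 + (x 1 - y 1) ^ 2) := by
  rw [EuclideanSpace.dist_eq]
  simp [Fin.sum_univ_two, Real.dist_eq, sq_abs]

private lemma myNormSq (x : EuclideanSpace ℝ (Fin 2)) : ‖x‖ ^ 2 = x 0 ^ 2 + x 1 ^ 2 := by
  rw [EuclideanSpace.norm_eq]
  rw [Real.sq_sqrt (by positivity)]
  simp [Fin.sum_univ_two, sq_abs]

private lemma myCoord (x : EuclideanSpace ℝ (Fin 2)) : |x 1| ≤ ‖x‖ := by
  have h := myNormSq x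
  apply mySq (abs_nonneg _) (norm_nonneg _)
  rw [sq_abs]
  nlinarith [sq_nonneg (x 0)]

private lemma myGeom {r s c : ℝ} (hr : 0 < r) (hs0 : 0 < s) (hc0 : 0 < c)
    (hsc : s ^ 2 + c ^ 2 = 1) (p : EuclideanSpace ℝ (Fin 2))
    (hpn : ‖p‖ ≤ r) (hp1 : p 1 ≤ r * s) :
    ∃ q : EuclideanSpace ℝ (Fin 2), (‖q‖ = r ∧ q 1 ≤ r * s) ∧ dist p q ≤ r := by
  rcases eq_or_ne p 0 with rfl | hp0
  · obtain ⟨q, hq0, hq1, hq2⟩ := myPt 0 (-r)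
    refine ⟨q, ⟨?_, by rw [hq1]; nlinarith⟩, ?_⟩
    · rw [hq2, show (0:ℝ) ^ 2 + (-r) ^ 2 = r ^ 2 by ring, Real.sqrt_sq hr.le]
    · rw [dist_comm, dist_zero_right, hq2,
        show (0:ℝ) ^ 2 + (-r) ^ 2 = r ^ 2 by ring, Real.sqrt_sq hr.le]
  · have hpn0 : 0 < ‖p‖ := norm_pos_iff.2 hp0
    rcases le_or_gt (p 1) (‖p‖ * s) with h1 | h1
    · -- radial projection works
      refine ⟨(r / ‖p‖) • p, ⟨?_, ?_⟩, ?_⟩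
      · rw [norm_smul, Real.norm_eq_abs, abs_of_pos (div_pos hr hpn0)]
        field_simp
      · show (r / ‖p‖) * p 1 ≤ r * s
        have := div_pos hr hpn0
        calc (r / ‖p‖) * p 1 ≤ (r / ‖p‖) * (‖p‖ * s) := by nlinarith
          _ = r * s := by field_simp
      · rw [dist_eq_norm, show p - (r / ‖p‖) • p = (1 - r / ‖p‖) • p by
          rw [sub_smul, one_smul], norm_smul, Real.norm_eq_abs]
        have h2 : 1 ≤ r / ‖p‖ := (one_le_div hpn0).2 hpn
        rw [abs_of_nonpos (by linarith), neg_sub, sub_mul, one_mul,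
          div_mul_cancel₀ _ hpn0.ne']
        linarith [norm_nonneg p]
    · -- endpoint of the arc works
      have hy0 : 0 < p 1 := lt_of_le_of_lt (by positivity) h1
      have hxy : p 0 ^ 2 + p 1 ^ 2 = ‖p‖ ^ 2 := (myNormSq p).symm
      have hb : p 0 ^ 2 + p 1 ^ 2 ≤ r ^ 2 := by
        rw [hxy]; exact pow_le_pow_left₀ (norm_nonneg p) hpn 2
      have hyc : (p 0 ^ 2 + p 1 ^ 2) * s ^ 2 < p 1 ^ 2 := by
        rw [hxy]
        nlinarith [mul_pos (sub_pos.2 h1) (by positivity : (0:ℝ) < p 1 + ‖p‖ * s)]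
      have hs2 : s ^ 2 = 1 - c ^ 2 := by linarith
      have hxrc : |p 0| ≤ r * c := by
        apply mySq (abs_nonneg _) (by positivity)
        rw [sq_abs]
        nlinarith [hyc, mul_le_mul_of_nonneg_right hb (sq_nonneg c), hs2]
      obtain ⟨q, hq0, hq1, hq2⟩ := myPt (if 0 ≤ p 0 then r * c else -(r * c)) (r * s)
      have hqn : ‖q‖ = r := by
        rw [hq2]
        have : (if 0 ≤ p 0 then r * c else -(r * c)) ^ 2 + (r * s) ^ 2 = r ^ 2 := by
          split_ifs <;> nlinarith
        rw [this, Real.sqrt_sq hr.le]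
      refine ⟨q, ⟨hqn, le_of_eq hq1⟩, ?_⟩
      rw [myDist, hq0, hq1]
      have key : (p 0 - if 0 ≤ p 0 then r * c else -(r * c)) ^ 2 + (p 1 - r * s) ^ 2
          ≤ r ^ 2 := by
        have h3 : p 0 ^ 2 ≤ r * c * |p 0| := by nlinarith [sq_abs (p 0), abs_nonneg (p 0)]
        have h4 : p 1 ^ 2 ≤ r * s * p 1 := by nlinarith
        have hr2 : r ^ 2 * s ^ 2 + r ^ 2 * c ^ 2 = r ^ 2 := by nlinarith [hsc]
        split_ifs with h5
        · rw [abs_of_nonneg h5] at h3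
          exact myKey h3 h4 hr2
        · rw [abs_of_neg (not_le.1 h5)] at h3
          have h3' : p 0 ^ 2 ≤ r * (-c) * p 0 := by nlinarith [h3]
          have := myKey (s := s) (c := -c) h3' h4 (by nlinarith [hr2])
          nlinarith [this]
      calc Real.sqrt ((p 0 - if 0 ≤ p 0 then r * c else -(r * c)) ^ 2 + (p 1 - r * s) ^ 2)
          ≤ Real.sqrt (r ^ 2) := Real.sqrt_le_sqrt key
        _ = r := Real.sqrt_sq hr.le

theorem arc_complement_connected_after_death
    (r θ ε : ℝ) (hr : 0 < r) (hθ : θ ∈ Set.Ioo 0 (Real.pi / 2))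
    (S : Set (EuclideanSpace ℝ (Fin 2)))
    (hS : S = {p : EuclideanSpace ℝ (Fin 2) | ‖p‖ = r ∧ p 1 ≤ r * Real.sin θ})
    (hε : r ≤ ε) :
    IsConnected (Metric.cthickening ε S)ᶜ := by
  obtain ⟨hθ0, hθ2⟩ := hθ
  have hs0 : 0 < Real.sin θ := Real.sin_pos_of_pos_of_lt_pi hθ0 (by linarith [Real.pi_pos])
  have hc0 : 0 < Real.cos θ := Real.cos_pos_of_mem_Ioo ⟨by linarith [Real.pi_pos], hθ2⟩
  set s := Real.sin θ with hsdef
  set c := Real.cos θ with hcdef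
  have hsc : s ^ 2 + c ^ 2 = 1 := Real.sin_sq_add_cos_sq θ
  have hε0 : 0 ≤ ε := le_trans hr.le hε
  -- the bottom point of the arc
  obtain ⟨b0, hb0, hb1, hb2⟩ := myPt 0 (-r)
  have hbS : b0 ∈ S := by
    rw [hS]
    refine ⟨?_, ?_⟩
    · rw [hb2]; rw [show (0:ℝ)^2 + (-r)^2 = r^2 by ring]; exact Real.sqrt_sq hr.le
    · rw [hb1]; nlinarith
  have hne : S.Nonempty := ⟨b0, hbS⟩
  -- membership characterization of the complement
  have memC : ∀ x : EuclideanSpace ℝ (Fin 2),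
      x ∈ (Metric.cthickening ε S)ᶜ ↔ ε < infDist x S := by
    intro x
    rw [mem_compl_iff, Metric.mem_cthickening_iff, not_le,
      ENNReal.ofReal_lt_iff_lt_toReal hε0 (Metric.infEdist_ne_top hne)]
    rfl
  have le_inf : ∀ (x : EuclideanSpace ℝ (Fin 2)) (d : ℝ),
      (∀ q ∈ S, d ≤ dist x q) → d ≤ Metric.infDist x S := by
    intro x d h
    rw [← not_lt, Metric.infDist_lt_iff hne]
    push_neg
    exact h
  have hSnorm : ∀ q ∈ S, ‖q‖ = r ∧ q 1 ≤ r * s := by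
    intro q hq; rw [hS] at hq; exact hq
  set R := r + ε + 1 with hRdef
  have hRpos : 0 < R := by linarith
  -- the exterior is in the complement
  have hExtC : {x : EuclideanSpace ℝ (Fin 2) | R ≤ ‖x‖} ⊆ (Metric.cthickening ε S)ᶜ := by
    intro x hx
    rw [memC]
    have : ε + 1 ≤ infDist x S := by
      apply le_inf
      intro q hq
      have hq1 := (hSnorm q hq).1
      have := norm_sub_norm_le x q
      rw [dist_eq_norm]
      have hx' : R ≤ ‖x‖ := hx
      linarith
    linarith
  -- rank of the plane
  have rank2 : 1 < Module.rank ℝ (EuclideanSpace ℝ (Fin 2)) := by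
    have h2 : (Module.finrank ℝ (EuclideanSpace ℝ (Fin 2)) : Cardinal) =
        Module.rank ℝ (EuclideanSpace ℝ (Fin 2)) := Module.finrank_eq_rank ℝ _
    rw [← h2, finrank_euclideanSpace_fin]
    exact_mod_cast one_lt_two
  -- radial path to the sphere of radius R, within the exterior
  have hRad : ∀ x : EuclideanSpace ℝ (Fin 2), R ≤ ‖x‖ →
      JoinedIn {z : EuclideanSpace ℝ (Fin 2) | R ≤ ‖z‖} x ((R / ‖x‖) • x) := by
    intro x hx
    have hx0 : 0 < ‖x‖ := lt_of_lt_of_le hRpos hx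
    have hd1 : R / ‖x‖ ≤ 1 := (div_le_one hx0).2 hx
    have hd0 : 0 < R / ‖x‖ := div_pos hRpos hx0
    have h := mySeg (C := {z : EuclideanSpace ℝ (Fin 2) | R ≤ ‖z‖}) x ((R / ‖x‖ - 1) • x) ?_
    · have he : x + (R / ‖x‖ - 1) • x = (R / ‖x‖) • x := by
        rw [sub_smul, one_smul]; abel
      rwa [he] at h
    · intro t ht0 ht1
      have he : x + t • (R / ‖x‖ - 1) • x = (1 + t * (R / ‖x‖ - 1)) • x := by
        rw [add_smul, one_smul, smul_smul]
      rw [he]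
      have ha : R / ‖x‖ ≤ 1 + t * (R / ‖x‖ - 1) := by nlinarith
      have ha0 : 0 ≤ 1 + t * (R / ‖x‖ - 1) := le_trans hd0.le ha
      show R ≤ ‖(1 + t * (R / ‖x‖ - 1)) • x‖
      rw [norm_smul, Real.norm_eq_abs, abs_of_nonneg ha0]
      calc R = (R / ‖x‖) * ‖x‖ := by field_simp
        _ ≤ (1 + t * (R / ‖x‖ - 1)) * ‖x‖ := by nlinarith
  -- any two exterior points are joined within the exterior
  have hExtJ : ∀ x y : EuclideanSpace ℝ (Fin 2), R ≤ ‖x‖ → R ≤ ‖y‖ →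
      JoinedIn {z : EuclideanSpace ℝ (Fin 2) | R ≤ ‖z‖} x y := by
    intro x y hx hy
    have hx0 : 0 < ‖x‖ := lt_of_lt_of_le hRpos hx
    have hy0 : 0 < ‖y‖ := lt_of_lt_of_le hRpos hy
    have hsub : Metric.sphere (0 : EuclideanSpace ℝ (Fin 2)) R ⊆
        {z : EuclideanSpace ℝ (Fin 2) | R ≤ ‖z‖} := by
      intro z hz
      rw [Metric.mem_sphere, dist_zero_right] at hz
      exact le_of_eq hz.symm
    have hxs : (R / ‖x‖) • x ∈ Metric.sphere (0 : EuclideanSpace ℝ (Fin 2)) R := by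
      rw [Metric.mem_sphere, dist_zero_right, norm_smul, Real.norm_eq_abs,
        abs_of_pos (div_pos hRpos hx0)]
      field_simp
    have hys : (R / ‖y‖) • y ∈ Metric.sphere (0 : EuclideanSpace ℝ (Fin 2)) R := by
      rw [Metric.mem_sphere, dist_zero_right, norm_smul, Real.norm_eq_abs,
        abs_of_pos (div_pos hRpos hy0)]
      field_simp
    have hsph : IsPathConnected (Metric.sphere (0 : EuclideanSpace ℝ (Fin 2)) R) :=
      isPathConnected_sphere rank2 0 hRpos.le
    have hmid : JoinedIn {z : EuclideanSpace ℝ (Fin 2) | R ≤ ‖z‖}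
        ((R / ‖x‖) • x) ((R / ‖y‖) • y) :=
      (hsph.joinedIn _ hxs _ hys).mono hsub
    exact ((hRad x hx).trans hmid).trans (hRad y hy).symm
  -- now prove path-connectedness
  have hPC : IsPathConnected (Metric.cthickening ε S)ᶜ := by
    obtain ⟨b, _, hb1', hb2'⟩ := myPt R 0
    have hbext : R ≤ ‖b‖ := by
      rw [hb2']; rw [show R^2 + (0:ℝ)^2 = R^2 by ring, Real.sqrt_sq hRpos.le]
    refine ⟨b, hExtC hbext, ?_⟩
    intro y hy
    -- it suffices to join y to some exterior point within the complement
    suffices h : ∃ z : EuclideanSpace ℝ (Fin 2), R ≤ ‖z‖ ∧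
        JoinedIn (Metric.cthickening ε S)ᶜ y z by
      obtain ⟨z, hz1, hz2⟩ := h
      exact ((hExtJ b z hbext hz1).mono hExtC).trans hz2.symm
    have hyC : ε < infDist y S := (memC y).1 hy
    rcases le_or_gt r ‖y‖ with hyr | hyr
    · -- radial escape
      have hy0 : 0 < ‖y‖ := lt_of_lt_of_le hr hyr
      refine ⟨y + (R / ‖y‖) • y, ?_, ?_⟩
      · have he : y + (R / ‖y‖) • y = (1 + R / ‖y‖) • y := by
          rw [add_smul, one_smul]
        rw [he, norm_smul, Real.norm_eq_abs,
          abs_of_pos (by positivity : (0:ℝ) < 1 + R / ‖y‖)]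
        have : (1 + R / ‖y‖) * ‖y‖ = ‖y‖ + R := by field_simp
        rw [this]; linarith
      · apply mySeg
        intro t ht0 ht1
        have he : y + t • (R / ‖y‖) • y = (1 + t * (R / ‖y‖)) • y := by
          rw [add_smul, one_smul, smul_smul]
        rw [he, memC]
        have ha1 : 1 ≤ 1 + t * (R / ‖y‖) := by
          have : 0 ≤ t * (R / ‖y‖) := mul_nonneg ht0 (div_pos hRpos hy0).le
          linarith
        set a := 1 + t * (R / ‖y‖) with hadef
        refine lt_of_lt_of_le hyC (le_inf _ _ ?_)
        intro q hq
        have hdq : infDist y S ≤ dist y q := Metric.infDist_le_dist_of_mem hq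
        refine le_trans hdq ?_
        -- dist y q ≤ dist (a • y) q
        have hqr := (hSnorm q hq).1
        have hip : ⟪y, q⟫ ≤ ‖y‖ ^ 2 := by
          have h1 := real_inner_le_norm y q
          nlinarith [norm_nonneg q]
        have hsq : ‖y - q‖ ^ 2 ≤ ‖a • y - q‖ ^ 2 := by
          rw [norm_sub_sq_real, norm_sub_sq_real, norm_smul, Real.norm_eq_abs,
            abs_of_pos (by linarith : (0:ℝ) < a), real_inner_smul_left]
          exact myGrow ha1 hip
        rw [dist_eq_norm, dist_eq_norm]
        exact mySq (norm_nonneg _) (norm_nonneg _) hsq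
    · -- inside the disc: must be above the cap line, escape vertically
      have hup : r * s < y 1 := by
        by_contra h
        push_neg at h
        obtain ⟨q, hq', hdq⟩ := myGeom hr hs0 hc0 hsc y hyr.le h
        have hq : q ∈ S := by rw [hS]; exact hq'
        have := Metric.infDist_le_dist_of_mem (x := y) hq
        linarith
      obtain ⟨v, hv0, hv1, _⟩ := myPt 0 (R + r)
      refine ⟨y + v, ?_, ?_⟩
      · have h1 : (y + v) 1 = y 1 + (R + r) := by
          simp [PiLp.add_apply, hv1]
        have h2 := myCoord (y + v)
        have h3 : y 1 + (R + r) ≤ |(y + v) 1| := by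
          rw [h1]; exact le_abs_self _
        have : 0 < y 1 := by nlinarith
        linarith
      · apply mySeg
        intro t ht0 ht1
        rw [memC]
        refine lt_of_lt_of_le hyC (le_inf _ _ ?_)
        intro q hq
        have hdq : infDist y S ≤ dist y q := Metric.infDist_le_dist_of_mem hq
        refine le_trans hdq ?_
        have hq1 := (hSnorm q hq).2
        rw [myDist, myDist]
        apply Real.sqrt_le_sqrt
        have e0 : (y + t • v) 0 = y 0 := by
          simp [PiLp.add_apply, PiLp.smul_apply, hv0]
        have e1 : (y + t • v) 1 = y 1 + t * (R + r) := by
          simp [PiLp.add_apply, PiLp.smul_apply, hv1, smul_eq_mul]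
        rw [e0, e1]
        have hy1q : q 1 < y 1 := lt_of_le_of_lt hq1 hup
        have htR : 0 ≤ t * (R + r) := mul_nonneg ht0 (by linarith)
        nlinarith
  exact hPC.isConnected
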